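/- Let μ be a probability measure on (Ω,𝓖) absolutely continuous with respect to ℙ|_𝓖 and ρ: L^∞ → ℝ. Then ρ is a Fatou coherent risk measure with ρ(X) = 𝔼^μ[X] for all 𝓖-measurable X ∈ L^∞ if and only if there exists a Fatou μ-coherent adjustment τ such that ρ = 𝔼^μ + τ. -/

import Mathlib

open MeasureTheory

namespace Stmt10Aux

open Filter

lemma myliminf (a b : ℕ → ℝ) (K c : ℝ) (ha : ∀ n, |a n| ≤ K)
    (hb : Filter.Tendsto b Filter.atTop (nhds c)) :
    Filter.liminf (fun n => a n + b n) Filter.atTop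
      = Filter.liminf a Filter.atTop + c := by
  have haU : IsBoundedUnder (· ≤ ·) atTop a :=
    isBoundedUnder_of ⟨K, fun n => (abs_le.1 (ha n)).2⟩
  have haL : IsBoundedUnder (· ≥ ·) atTop a :=
    isBoundedUnder_of ⟨-K, fun n => (abs_le.1 (ha n)).1⟩
  have hbU : IsBoundedUnder (· ≤ ·) atTop b := hb.isBoundedUnder_le
  have hbL : IsBoundedUnder (· ≥ ·) atTop b := hb.isBoundedUnder_ge
  have h1 : liminf a atTop + liminf b atTop ≤ liminf (a + b) atTop :=
    le_liminf_add haL haU hbL hbU.isCoboundedUnder_ge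
  have h2 : liminf (b + a) atTop ≤ limsup b atTop + liminf a atTop :=
    liminf_add_le hbL hbU haL haU.isCoboundedUnder_ge
  have hab : (fun n => a n + b n) = a + b := rfl
  have hba : b + a = a + b := by funext n; exact add_comm _ _
  rw [hb.liminf_eq] at h1
  rw [hba, hb.limsup_eq] at h2
  rw [hab]
  linarith

variable {Ω : Type*} {mΩ : MeasurableSpace Ω} {ℙ : Measure Ω} {Dμ : Ω → ℝ}

lemma intD (hD : Integrable Dμ ℙ) {X : Ω → ℝ} (hX : Measurable X)
    (hb : ∃ C, ∀ ω, |X ω| ≤ C) : Integrable (fun ω => Dμ ω * X ω) ℙ := by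
  obtain ⟨C, hC⟩ := hb
  have := hD.bdd_mul hX.aestronglyMeasurable
    (Filter.Eventually.of_forall fun ω => by simpa [Real.norm_eq_abs] using hC ω)
  simpa [mul_comm] using this

lemma Ebound [IsProbabilityMeasure ℙ] (hD : Integrable Dμ ℙ)
    (hDpos : ∀ᵐ ω ∂ℙ, 0 ≤ Dμ ω) (hone : (∫ ω, Dμ ω ∂ℙ) = 1)
    {X : Ω → ℝ} (hX : Measurable X) {C : ℝ} (hC : ∀ ω, |X ω| ≤ C) :
    |∫ ω, Dμ ω * X ω ∂ℙ| ≤ C := by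
  have h1 : |∫ ω, Dμ ω * X ω ∂ℙ| ≤ ∫ ω, |Dμ ω * X ω| ∂ℙ := by
    have := norm_integral_le_integral_norm (μ := ℙ) (fun ω => Dμ ω * X ω)
    simpa only [Real.norm_eq_abs] using this
  have h2 : (∫ ω, |Dμ ω * X ω| ∂ℙ) ≤ ∫ ω, C * Dμ ω ∂ℙ := by
    refine integral_mono_ae (intD hD hX ⟨C, hC⟩).abs (hD.const_mul C) ?_
    filter_upwards [hDpos] with ω hω
    have : |Dμ ω * X ω| = Dμ ω * |X ω| := by rw [abs_mul, abs_of_nonneg hω]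
    rw [this, mul_comm C (Dμ ω)]
    exact mul_le_mul_of_nonneg_left (hC ω) hω
  have h3 : (∫ ω, C * Dμ ω ∂ℙ) = C := by
    rw [integral_const_mul, hone, mul_one]
  linarith

lemma Etendsto (hD : Integrable Dμ ℙ) (Xs : ℕ → Ω → ℝ) (X : Ω → ℝ) (C : ℝ)
    (hms : ∀ n, Measurable (Xs n)) (hbs : ∀ n ω, |Xs n ω| ≤ C)
    (hconv : ∀ᵐ ω ∂ℙ, Filter.Tendsto (fun n => Xs n ω) Filter.atTop (nhds (X ω))) :
    Filter.Tendsto (fun n => ∫ ω, Dμ ω * Xs n ω ∂ℙ) Filter.atTop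
      (nhds (∫ ω, Dμ ω * X ω ∂ℙ)) := by
  refine tendsto_integral_of_dominated_convergence (fun ω => |Dμ ω| * C)
    (fun n => hD.1.mul (hms n).aestronglyMeasurable) (hD.abs.mul_const C) ?_ ?_
  · intro n
    filter_upwards with ω
    rw [Real.norm_eq_abs, abs_mul]
    exact mul_le_mul_of_nonneg_left (hbs n ω) (abs_nonneg _)
  · filter_upwards [hconv] with ω hω
    exact hω.const_mul (Dμ ω)

end Stmt10Aux

open Stmt10Aux

/-- ρ is a Fatou coherent risk measure whose restriction to L^∞(𝓖) is 𝔼^μ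
if and only if ρ = 𝔼^μ + τ for some Fatou μ-coherent adjustment τ. -/
theorem stmt_10 {Ω : Type*} (m : MeasurableSpace Ω) {mΩ : MeasurableSpace Ω} (hm : m ≤ mΩ)
    (ℙ : Measure Ω) [IsProbabilityMeasure ℙ]
    (Dμ : Ω → ℝ) (hDμmeas : StronglyMeasurable[m] Dμ) (hDμpos : ∀ᵐ ω ∂ℙ, 0 ≤ Dμ ω)
    (hDμint : Integrable Dμ ℙ) (hDμone : (∫ ω, Dμ ω ∂ℙ) = 1)
    (ρ : (Ω → ℝ) → ℝ) :
    -- (i) ρ is a Fatou coherent risk measure with ρ|_{L^∞(𝓖)} = 𝔼^μ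
    (((∀ (X : Ω → ℝ) (c : ℝ), Measurable X → (∃ C : ℝ, ∀ ω, |X ω| ≤ C) →
        ρ (fun ω => X ω + c) = ρ X + c)
      ∧ (∀ X Y : Ω → ℝ, Measurable X → (∃ C : ℝ, ∀ ω, |X ω| ≤ C) → Measurable Y →
          (∃ C : ℝ, ∀ ω, |Y ω| ≤ C) → (∀ᵐ ω ∂ℙ, X ω ≤ Y ω) → ρ X ≤ ρ Y)
      ∧ (∀ X Y : Ω → ℝ, Measurable X → (∃ C : ℝ, ∀ ω, |X ω| ≤ C) → Measurable Y →
          (∃ C : ℝ, ∀ ω, |Y ω| ≤ C) → ∀ lam : ℝ, 0 ≤ lam → lam ≤ 1 →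
          ρ (fun ω => lam * X ω + (1 - lam) * Y ω) ≤ lam * ρ X + (1 - lam) * ρ Y)
      ∧ (∀ X : Ω → ℝ, Measurable X → (∃ C : ℝ, ∀ ω, |X ω| ≤ C) → ∀ lam : ℝ, 0 ≤ lam →
          ρ (fun ω => lam * X ω) = lam * ρ X)
      ∧ (∀ (Xs : ℕ → Ω → ℝ) (X : Ω → ℝ) (C : ℝ), (∀ n, Measurable (Xs n)) →
          (∀ n ω, |Xs n ω| ≤ C) → Measurable X → (∀ ω, |X ω| ≤ C) →
          (∀ᵐ ω ∂ℙ, Filter.Tendsto (fun n => Xs n ω) Filter.atTop (nhds (X ω))) →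
          ρ X ≤ Filter.liminf (fun n => ρ (Xs n)) Filter.atTop)
      ∧ (∀ X : Ω → ℝ, StronglyMeasurable[m] X → (∃ C : ℝ, ∀ ω, |X ω| ≤ C) →
          ρ X = ∫ ω, Dμ ω * X ω ∂ℙ))
    ↔
    -- (ii) there is a Fatou μ-coherent adjustment τ with ρ = 𝔼^μ + τ
    (∃ τ : (Ω → ℝ) → ℝ,
      ((∀ X Y : Ω → ℝ, Measurable X → (∃ C : ℝ, ∀ ω, |X ω| ≤ C) →
          StronglyMeasurable[m] Y → (∃ C : ℝ, ∀ ω, |Y ω| ≤ C) → τ (X + Y) = τ X)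
        ∧ (∀ X Y : Ω → ℝ, Measurable X → (∃ C : ℝ, ∀ ω, |X ω| ≤ C) → Measurable Y →
            (∃ C : ℝ, ∀ ω, |Y ω| ≤ C) → (∀ᵐ ω ∂ℙ, X ω ≤ Y ω) →
            (∫ ω, Dμ ω * X ω ∂ℙ) + τ X ≤ (∫ ω, Dμ ω * Y ω ∂ℙ) + τ Y)
        ∧ (∀ X Y : Ω → ℝ, Measurable X → (∃ C : ℝ, ∀ ω, |X ω| ≤ C) → Measurable Y →
            (∃ C : ℝ, ∀ ω, |Y ω| ≤ C) → ∀ lam : ℝ, 0 ≤ lam → lam ≤ 1 →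
            τ (fun ω => lam * X ω + (1 - lam) * Y ω) ≤ lam * τ X + (1 - lam) * τ Y)
        ∧ (∀ X : Ω → ℝ, Measurable X → (∃ C : ℝ, ∀ ω, |X ω| ≤ C) → ∀ lam : ℝ, 0 ≤ lam →
            τ (fun ω => lam * X ω) = lam * τ X)
        ∧ (∀ (Xs : ℕ → Ω → ℝ) (X : Ω → ℝ) (C : ℝ), (∀ n, Measurable (Xs n)) →
            (∀ n ω, |Xs n ω| ≤ C) → Measurable X → (∀ ω, |X ω| ≤ C) →
            (∀ᵐ ω ∂ℙ, Filter.Tendsto (fun n => Xs n ω) Filter.atTop (nhds (X ω))) →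
            τ X ≤ Filter.liminf (fun n => τ (Xs n)) Filter.atTop))
      ∧ ∀ X : Ω → ℝ, Measurable X → (∃ C : ℝ, ∀ ω, |X ω| ≤ C) →
          ρ X = (∫ ω, Dμ ω * X ω ∂ℙ) + τ X)) := by
  constructor
  · rintro ⟨hCI, hmono, hconv, hph, hfatou, hrest⟩
    -- basic consequences
    have hρ0 : ρ (fun _ => (0:ℝ)) = 0 := by
      have h := hph (fun _ => (0:ℝ)) measurable_const ⟨0, by simp⟩ 0 le_rfl
      simpa using h
    have hρconst : ∀ c : ℝ, ρ (fun _ => c) = c := by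
      intro c
      have h := hCI (fun _ => (0:ℝ)) c measurable_const ⟨0, by simp⟩
      simpa [hρ0] using h
    have hbnd : ∀ (X : Ω → ℝ) (C : ℝ), Measurable X → (∀ ω, |X ω| ≤ C) → |ρ X| ≤ C := by
      intro X C hX hC
      have h1 : ρ X ≤ ρ (fun _ => C) :=
        hmono X _ hX ⟨C, hC⟩ measurable_const ⟨|C|, fun _ => le_rfl⟩
          (Filter.Eventually.of_forall fun ω => (abs_le.1 (hC ω)).2)
      have h2 : ρ (fun _ => -C) ≤ ρ X :=
        hmono _ X measurable_const ⟨|C|, fun _ => by rw [abs_neg]⟩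
          hX ⟨C, hC⟩ (Filter.Eventually.of_forall fun ω => (abs_le.1 (hC ω)).1)
      rw [hρconst] at h1 h2
      exact abs_le.2 ⟨h2, h1⟩
    have hsub : ∀ (X Y : Ω → ℝ) (CX CY : ℝ), Measurable X → Measurable Y →
        (∀ ω, |X ω| ≤ CX) → (∀ ω, |Y ω| ≤ CY) →
        ρ (fun ω => X ω + Y ω) ≤ ρ X + ρ Y := by
      intro X Y CX CY hX hY hCX hCY
      have h := hconv (fun ω => 2 * X ω) (fun ω => 2 * Y ω) (hX.const_mul 2)
        ⟨2 * CX, fun ω => by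
          rw [abs_mul, abs_two]; exact mul_le_mul_of_nonneg_left (hCX ω) (by norm_num)⟩
        (hY.const_mul 2)
        ⟨2 * CY, fun ω => by
          rw [abs_mul, abs_two]; exact mul_le_mul_of_nonneg_left (hCY ω) (by norm_num)⟩
        (1/2) (by norm_num) (by norm_num)
      have e : (fun ω => (1/2 : ℝ) * (2 * X ω) + (1 - 1/2) * (2 * Y ω))
          = fun ω => X ω + Y ω := funext fun ω => by ring
      have p1 := hph X hX ⟨CX, hCX⟩ 2 (by norm_num)
      have p2 := hph Y hY ⟨CY, hCY⟩ 2 (by norm_num)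
      rw [e, p1, p2] at h
      linarith
    refine ⟨fun X => ρ X - ∫ ω, Dμ ω * X ω ∂ℙ, ⟨?_, ?_, ?_, ?_, ?_⟩, ?_⟩
    · -- 𝓖-invariance
      intro X Y hX hbX hYm hbY
      obtain ⟨CX, hCX⟩ := hbX
      obtain ⟨CY, hCY⟩ := hbY
      have hYmeas : Measurable Y := hYm.measurable.mono hm le_rfl
      have hXY : Measurable (fun ω => X ω + Y ω) := hX.add hYmeas
      have hsumb : ∀ ω, |X ω + Y ω| ≤ CX + CY :=
        fun ω => (abs_add_le _ _).trans (add_le_add (hCX ω) (hCY ω))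
      have h1 : ρ (fun ω => X ω + Y ω) ≤ ρ X + ρ Y :=
        hsub X Y CX CY hX hYmeas hCX hCY
      have h2 : ρ X ≤ ρ (fun ω => X ω + Y ω) + ρ (fun ω => -Y ω) := by
        have h := hsub (fun ω => X ω + Y ω) (fun ω => -Y ω) (CX + CY) CY hXY hYmeas.neg
          hsumb (fun ω => by rw [abs_neg]; exact hCY ω)
        have e : (fun ω => (X ω + Y ω) + -Y ω) = X := funext fun ω => by ring
        rwa [e] at h
      have hρY : ρ Y = ∫ ω, Dμ ω * Y ω ∂ℙ := hrest Y hYm ⟨CY, hCY⟩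
      have hρnY : ρ (fun ω => -Y ω) = ∫ ω, Dμ ω * (-Y ω) ∂ℙ :=
        hrest _ hYm.neg ⟨CY, fun ω => by rw [abs_neg]; exact hCY ω⟩
      have hIneg : (∫ ω, Dμ ω * (-Y ω) ∂ℙ) = -∫ ω, Dμ ω * Y ω ∂ℙ := by
        rw [show (∫ ω, Dμ ω * (-Y ω) ∂ℙ) = ∫ ω, -(Dμ ω * Y ω) ∂ℙ from by
          congr 1; funext ω; ring]
        exact integral_neg _
      have hIadd : (∫ ω, Dμ ω * (X ω + Y ω) ∂ℙ)
          = (∫ ω, Dμ ω * X ω ∂ℙ) + ∫ ω, Dμ ω * Y ω ∂ℙ := by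
        rw [show (∫ ω, Dμ ω * (X ω + Y ω) ∂ℙ)
            = ∫ ω, (Dμ ω * X ω + Dμ ω * Y ω) ∂ℙ from by
          congr 1; funext ω; ring]
        exact integral_add (intD hDμint hX ⟨CX, hCX⟩) (intD hDμint hYmeas ⟨CY, hCY⟩)
      have hXYeq : X + Y = fun ω => X ω + Y ω := rfl
      show ρ (X + Y) - (∫ ω, Dμ ω * (X + Y) ω ∂ℙ) = ρ X - ∫ ω, Dμ ω * X ω ∂ℙ
      rw [hXYeq]
      have hI2 : (∫ ω, Dμ ω * (fun ω => X ω + Y ω) ω ∂ℙ)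
          = (∫ ω, Dμ ω * X ω ∂ℙ) + ∫ ω, Dμ ω * Y ω ∂ℙ := hIadd
      rw [hI2]
      rw [hρY] at h1
      rw [hρnY, hIneg] at h2
      linarith
    · -- μ-monotonicity
      intro X Y hX hbX hY hbY hle
      have h := hmono X Y hX hbX hY hbY hle
      simp only []
      linarith
    · -- convexity
      intro X Y hX hbX hY hbY lam h0 h1
      obtain ⟨CX, hCX⟩ := hbX
      obtain ⟨CY, hCY⟩ := hbY
      have h := hconv X Y hX ⟨CX, hCX⟩ hY ⟨CY, hCY⟩ lam h0 h1
      have hI : (∫ ω, Dμ ω * (lam * X ω + (1 - lam) * Y ω) ∂ℙ)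
          = lam * (∫ ω, Dμ ω * X ω ∂ℙ) + (1 - lam) * ∫ ω, Dμ ω * Y ω ∂ℙ := by
        rw [show (∫ ω, Dμ ω * (lam * X ω + (1 - lam) * Y ω) ∂ℙ)
            = ∫ ω, (lam * (Dμ ω * X ω) + (1 - lam) * (Dμ ω * Y ω)) ∂ℙ from by
          congr 1; funext ω; ring]
        rw [integral_add ((intD hDμint hX ⟨CX, hCX⟩).const_mul lam)
          ((intD hDμint hY ⟨CY, hCY⟩).const_mul (1 - lam)),
          integral_const_mul, integral_const_mul]
      simp only []
      rw [hI]
      linarith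
    · -- positive homogeneity
      intro X hX hbX lam hlam
      obtain ⟨CX, hCX⟩ := hbX
      have hI : (∫ ω, Dμ ω * (lam * X ω) ∂ℙ) = lam * ∫ ω, Dμ ω * X ω ∂ℙ := by
        rw [show (∫ ω, Dμ ω * (lam * X ω) ∂ℙ)
            = ∫ ω, lam * (Dμ ω * X ω) ∂ℙ from by congr 1; funext ω; ring,
          integral_const_mul]
      have h := hph X hX ⟨CX, hCX⟩ lam hlam
      simp only []
      rw [hI, h]
      ring
    · -- Fatou
      intro Xs X C hms hbs hX hbX hcv
      have hT : Filter.Tendsto (fun n => ∫ ω, Dμ ω * Xs n ω ∂ℙ) Filter.atTop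
          (nhds (∫ ω, Dμ ω * X ω ∂ℙ)) := Etendsto hDμint Xs X C hms hbs hcv
      have hbρ : ∀ n, |ρ (Xs n)| ≤ C := fun n => hbnd _ C (hms n) (hbs n)
      have key := myliminf (fun n => ρ (Xs n)) (fun n => -∫ ω, Dμ ω * Xs n ω ∂ℙ) C
        (-∫ ω, Dμ ω * X ω ∂ℙ) hbρ hT.neg
      have e : (fun n => ρ (Xs n) + -∫ ω, Dμ ω * Xs n ω ∂ℙ)
          = fun n => ρ (Xs n) - ∫ ω, Dμ ω * Xs n ω ∂ℙ :=
        funext fun n => (sub_eq_add_neg _ _).symm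
      rw [e] at key
      have h := hfatou Xs X C hms hbs hX hbX hcv
      simp only []
      rw [key]
      linarith
    · intro X hX hbX
      ring
  · rintro ⟨τ, ⟨hinv, hmono, hconv, hph, hfatou⟩, hρ⟩
    have hτ0 : τ (fun _ => (0:ℝ)) = 0 := by
      have h := hph (fun _ => (0:ℝ)) measurable_const ⟨0, by simp⟩ 0 le_rfl
      simpa using h
    have hτconst : ∀ c : ℝ, τ (fun _ => c) = 0 := by
      intro c
      have h := hinv (fun _ => (0:ℝ)) (fun _ => c) measurable_const ⟨0, by simp⟩
        stronglyMeasurable_const ⟨|c|, fun _ => le_rfl⟩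
      rw [show ((fun _ => (0:ℝ)) + fun _ => c) = fun _ => c from
        funext fun ω => zero_add c] at h
      rw [h, hτ0]
    have hEconst : ∀ c : ℝ, (∫ ω, Dμ ω * c ∂ℙ) = c := by
      intro c
      rw [integral_mul_const, hDμone, one_mul]
    refine ⟨?_, ?_, ?_, ?_, ?_, ?_⟩
    · -- cash invariance
      intro X c hX hbX
      obtain ⟨C, hC⟩ := hbX
      have hXc : Measurable (fun ω => X ω + c) := hX.add_const c
      have hbXc : ∃ C', ∀ ω, |X ω + c| ≤ C' :=
        ⟨C + |c|, fun ω => (abs_add_le _ _).trans (add_le_add (hC ω) le_rfl)⟩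
      rw [hρ _ hXc hbXc, hρ X hX ⟨C, hC⟩]
      have hτ : τ (fun ω => X ω + c) = τ X := by
        have h := hinv X (fun _ => c) hX ⟨C, hC⟩ stronglyMeasurable_const
          ⟨|c|, fun _ => le_rfl⟩
        rwa [show (X + fun _ => c) = fun ω => X ω + c from rfl] at h
      have hE : (∫ ω, Dμ ω * (X ω + c) ∂ℙ) = (∫ ω, Dμ ω * X ω ∂ℙ) + c := by
        rw [show (∫ ω, Dμ ω * (X ω + c) ∂ℙ)
            = ∫ ω, (Dμ ω * X ω + c * Dμ ω) ∂ℙ from by congr 1; funext ω; ring,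
          integral_add (intD hDμint hX ⟨C, hC⟩) (hDμint.const_mul c),
          integral_const_mul, hDμone, mul_one]
      rw [hτ, hE]
      ring
    · -- monotonicity
      intro X Y hX hbX hY hbY hle
      rw [hρ X hX hbX, hρ Y hY hbY]
      exact hmono X Y hX hbX hY hbY hle
    · -- convexity
      intro X Y hX hbX hY hbY lam h0 h1
      obtain ⟨CX, hCX⟩ := hbX
      obtain ⟨CY, hCY⟩ := hbY
      have hmix : Measurable (fun ω => lam * X ω + (1 - lam) * Y ω) :=
        (hX.const_mul lam).add (hY.const_mul (1 - lam))
      have hbmix : ∃ C', ∀ ω, |lam * X ω + (1 - lam) * Y ω| ≤ C' := by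
        refine ⟨lam * CX + (1 - lam) * CY, fun ω => (abs_add_le _ _).trans ?_⟩
        rw [abs_mul, abs_mul, abs_of_nonneg h0, abs_of_nonneg (by linarith : (0:ℝ) ≤ 1 - lam)]
        exact add_le_add (mul_le_mul_of_nonneg_left (hCX ω) h0)
          (mul_le_mul_of_nonneg_left (hCY ω) (by linarith))
      rw [hρ _ hmix hbmix, hρ X hX ⟨CX, hCX⟩, hρ Y hY ⟨CY, hCY⟩]
      have hI : (∫ ω, Dμ ω * (lam * X ω + (1 - lam) * Y ω) ∂ℙ)
          = lam * (∫ ω, Dμ ω * X ω ∂ℙ) + (1 - lam) * ∫ ω, Dμ ω * Y ω ∂ℙ := by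
        rw [show (∫ ω, Dμ ω * (lam * X ω + (1 - lam) * Y ω) ∂ℙ)
            = ∫ ω, (lam * (Dμ ω * X ω) + (1 - lam) * (Dμ ω * Y ω)) ∂ℙ from by
          congr 1; funext ω; ring]
        rw [integral_add ((intD hDμint hX ⟨CX, hCX⟩).const_mul lam)
          ((intD hDμint hY ⟨CY, hCY⟩).const_mul (1 - lam)),
          integral_const_mul, integral_const_mul]
      have h := hconv X Y hX ⟨CX, hCX⟩ hY ⟨CY, hCY⟩ lam h0 h1
      rw [hI]
      linarith
    · -- positive homogeneity
      intro X hX hbX lam hlam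
      obtain ⟨C, hC⟩ := hbX
      have hlX : Measurable (fun ω => lam * X ω) := hX.const_mul lam
      have hblX : ∃ C', ∀ ω, |lam * X ω| ≤ C' :=
        ⟨lam * C, fun ω => by
          rw [abs_mul, abs_of_nonneg hlam]
          exact mul_le_mul_of_nonneg_left (hC ω) hlam⟩
      rw [hρ _ hlX hblX, hρ X hX ⟨C, hC⟩]
      have hI : (∫ ω, Dμ ω * (lam * X ω) ∂ℙ) = lam * ∫ ω, Dμ ω * X ω ∂ℙ := by
        rw [show (∫ ω, Dμ ω * (lam * X ω) ∂ℙ)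
            = ∫ ω, lam * (Dμ ω * X ω) ∂ℙ from by congr 1; funext ω; ring,
          integral_const_mul]
      have h := hph X hX ⟨C, hC⟩ lam hlam
      rw [hI, h]
      ring
    · -- Fatou
      intro Xs X C hms hbs hX hbX hcv
      have hT : Filter.Tendsto (fun n => ∫ ω, Dμ ω * Xs n ω ∂ℙ) Filter.atTop
          (nhds (∫ ω, Dμ ω * X ω ∂ℙ)) := Etendsto hDμint Xs X C hms hbs hcv
      have hτbd : ∀ n, |τ (Xs n)| ≤ 2 * C := by
        intro n
        have hEn : |∫ ω, Dμ ω * Xs n ω ∂ℙ| ≤ C :=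
          Ebound hDμint hDμpos hDμone (hms n) (hbs n)
        have hEn' := abs_le.1 hEn
        have hlow : (∫ ω, Dμ ω * (-C : ℝ) ∂ℙ) + τ (fun _ => (-C : ℝ))
            ≤ (∫ ω, Dμ ω * Xs n ω ∂ℙ) + τ (Xs n) :=
          hmono (fun _ => -C) (Xs n) measurable_const
            ⟨|C|, fun _ => by rw [abs_neg]⟩ (hms n) ⟨C, hbs n⟩
            (Filter.Eventually.of_forall fun ω => (abs_le.1 (hbs n ω)).1)
        have hhigh : (∫ ω, Dμ ω * Xs n ω ∂ℙ) + τ (Xs n)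
            ≤ (∫ ω, Dμ ω * (C : ℝ) ∂ℙ) + τ (fun _ => (C : ℝ)) :=
          hmono (Xs n) (fun _ => C) (hms n) ⟨C, hbs n⟩ measurable_const
            ⟨|C|, fun _ => le_rfl⟩
            (Filter.Eventually.of_forall fun ω => (abs_le.1 (hbs n ω)).2)
        rw [hEconst, hτconst] at hlow hhigh
        rw [add_zero] at hlow hhigh
        exact abs_le.2 ⟨by linarith, by linarith⟩
      have key := myliminf (fun n => τ (Xs n)) (fun n => ∫ ω, Dμ ω * Xs n ω ∂ℙ)
        (2 * C) (∫ ω, Dμ ω * X ω ∂ℙ) hτbd hT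
      have e : (fun n => ρ (Xs n))
          = fun n => τ (Xs n) + ∫ ω, Dμ ω * Xs n ω ∂ℙ :=
        funext fun n => by rw [hρ _ (hms n) ⟨C, hbs n⟩]; ring
      rw [hρ X hX ⟨C, hbX⟩, e, key]
      have h := hfatou Xs X C hms hbs hX hbX hcv
      linarith
    · -- restriction to 𝓖-measurable
      intro X hXm hbX
      have hXmeas : Measurable X := hXm.measurable.mono hm le_rfl
      rw [hρ X hXmeas hbX]
      have hτX : τ X = 0 := by
        have h := hinv (fun _ => (0:ℝ)) X measurable_const ⟨0, by simp⟩ hXm hbX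
        rw [show ((fun _ => (0:ℝ)) + X) = X from funext fun ω => zero_add (X ω)] at h
        rw [h, hτ0]
      rw [hτX, add_zero]
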